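/- Let G = (B, W, E) be a finite connected bipartite graph and let w : E → ℂ^× be a nowhere-zero edge weight function such that for every cycle C of G (with either choice of orientation) the Kasteleyn curvature satisfies c(C) ∈ {1, −1}. Then w is equivalent to a weight function taking values in {1, −1}: there exists a function f : B ∪ W → ℂ^× such that for every edge e = {u, v} ∈ E one has f(u) · f(v) · w(e) ∈ {1, −1}. -/

import Mathlib

/-!
STATEMENT 6: Let `G` be a finite connected bipartite graph (bipartition given by a
2-colouring `col`, black = `false`) with a nowhere-zero edge weight `w : E → ℂˣ`
such that every cycle `C` (with either orientation) has Kasteleyn curvature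
`c(C) = (-1)^{|C|/2 + 1} (∏_{e ∈ C₊} w e) / (∏_{e ∈ C₋} w e) ∈ {1, -1}`, where `C₊`
are the edges of `C` traversed from black to white and `C₋` the others.  Then `w` is
equivalent to a weight function with values in `{1, -1}`: there is `f : V → ℂˣ` with
`f u · f v · w {u,v} ∈ {1, -1}` for every edge `{u, v}`.
-/

open SimpleGraph

section
variable {V : Type*} {G : SimpleGraph V} (col : V → Bool) (w : Sym2 V → ℂ)

/-- The dart-product ratio: black-start darts over white-start darts. -/
noncomputable def kasPhi {a b : V} (p : G.Walk a b) : ℂ :=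
  ((p.darts.filter fun d => !col d.fst).map fun d => w d.edge).prod /
    ((p.darts.filter fun d => col d.fst).map fun d => w d.edge).prod

@[simp] lemma kasPhi_nil {a : V} : kasPhi col w (SimpleGraph.Walk.nil : G.Walk a a) = 1 := by
  simp [kasPhi]

lemma kasPhi_append {a b c : V} (p : G.Walk a b) (q : G.Walk b c) :
    kasPhi col w (p.append q) = kasPhi col w p * kasPhi col w q := by
  simp [kasPhi, Walk.darts_append, List.filter_append, div_mul_div_comm]

lemma kasPhi_perm {a b a' b' : V} {p : G.Walk a b} {q : G.Walk a' b'} (h : p.darts.Perm q.darts) :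
    kasPhi col w p = kasPhi col w q := by
  unfold kasPhi
  rw [(h.filter _).map _ |>.prod_eq, (h.filter _).map _ |>.prod_eq]

lemma kasPhi_reverse (hbip : ∀ u v, G.Adj u v → col u ≠ col v)
    {a b : V} (p : G.Walk a b) :
    kasPhi col w p.reverse = (kasPhi col w p)⁻¹ := by
  have key : ∀ d : G.Dart, (!col d.snd) = col d.fst := by
    intro d
    have := hbip _ _ d.adj
    cases h1 : col d.fst <;> cases h2 : col d.snd <;> simp_all
  unfold kasPhi
  rw [Walk.darts_reverse, List.filter_reverse, List.filter_reverse,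
    List.map_reverse, List.map_reverse, List.prod_reverse, List.prod_reverse,
    List.filter_map, List.filter_map, inv_div]
  have e1 : ((fun d => w d.edge) ∘ Dart.symm : G.Dart → ℂ) = fun d => w d.edge :=
    funext fun d => by simp [Dart.edge_symm]
  have e2 : ((fun d => !col d.fst) ∘ Dart.symm : G.Dart → Bool) = fun d => col d.fst :=
    funext fun d => key d
  have e3 : ((fun d => col d.fst) ∘ Dart.symm : G.Dart → Bool) = fun d => !col d.fst := by
    funext d
    have := key d
    cases h1 : col d.fst <;> simp_all
  rw [List.map_map, List.map_map, e1, e2, e3]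

lemma kasPhi_cons {a b c : V} (h : G.Adj a b) (p : G.Walk b c) :
    kasPhi col w (Walk.cons h p) =
      (if col a then (w s(a, b))⁻¹ else w s(a, b)) * kasPhi col w p := by
  unfold kasPhi
  rw [Walk.darts_cons]
  cases hc : col a <;>
    simp only [List.filter_cons, hc, Bool.not_false, Bool.not_true, if_true, if_false,
      List.map_cons, List.prod_cons, cond_true, cond_false, if_neg, Bool.false_eq_true,
      not_false_iff] <;>
  · have he : ({ toProd := (a, b), adj := h } : G.Dart).edge = s(a, b) := rfl
    rw [he, div_eq_mul_inv, div_eq_mul_inv]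
    try rw [mul_inv]
    ring

lemma kasPhi_ne_zero (hw : ∀ e ∈ G.edgeSet, w e ≠ 0) {a b : V} (p : G.Walk a b) :
    kasPhi col w p ≠ 0 := by
  apply div_ne_zero <;>
  · apply List.prod_ne_zero
    intro h0
    simp only [List.mem_map, List.mem_filter] at h0
    obtain ⟨d, hd, hd0⟩ := h0
    exact hw _ d.edge_mem hd0

lemma isPath_edge_mem {u v : V} (q : G.Walk u v) (hq : q.IsPath) (he : s(u, v) ∈ q.edges) :
    ∃ h' : G.Adj u v, q = Walk.cons h' Walk.nil := by
  cases q with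
  | nil => simp at he
  | cons h'' q'' =>
    rename_i x
    rw [Walk.edges_cons, List.mem_cons] at he
    rcases he with he | he
    · rw [Sym2.eq_iff] at he
      rcases he with ⟨-, hvx⟩ | ⟨hux, hvu⟩
      · subst hvx
        have : q'' = Walk.nil := by
          have hp : q''.IsPath := hq.of_cons
          rwa [SimpleGraph.Walk.isPath_iff_eq_nil] at hp
        subst this
        exact ⟨h'', rfl⟩
      · subst hux
        exact absurd rfl h''.ne
    · exfalso
      have hu : u ∈ q''.support := q''.fst_mem_support_of_mem_edges he
      have := hq.support_nodup
      rw [Walk.support_cons, List.nodup_cons] at this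
      exact this.1 hu

lemma pm_mul_pm {x y : ℂ} (hx : x ∈ ({1, -1} : Set ℂ)) (hy : y ∈ ({1, -1} : Set ℂ)) :
    x * y ∈ ({1, -1} : Set ℂ) := by
  rcases hx with hx | hx <;> rcases hy with hy | hy <;>
    simp_all [Set.mem_insert_iff, Set.mem_singleton_iff]

lemma kasPhi_closed (hbip : ∀ u v, G.Adj u v → col u ≠ col v)
    (hw : ∀ e ∈ G.edgeSet, w e ≠ 0)
    (hcurv : ∀ (v : V) (p : G.Walk v v), p.IsCycle →
      (-1 : ℂ) ^ (p.length / 2 + 1) *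
          (((p.darts.filter fun d => !col d.fst).map fun d => w d.edge).prod /
            ((p.darts.filter fun d => col d.fst).map fun d => w d.edge).prod)
        ∈ ({1, -1} : Set ℂ)) :
    ∀ (n : ℕ) (v : V) (p : G.Walk v v), p.length ≤ n →
      kasPhi col w p ∈ ({1, -1} : Set ℂ) := by
  intro n
  induction n with
  | zero =>
    intro v p hp
    cases p with
    | nil => simp
    | cons h q => simp at hp
  | succ n ih =>
    intro v p hp
    classical
    by_cases hnodup : p.support.tail.Nodup
    · -- support tail has no duplicates
      cases p with
      | nil => simp
      | cons h q =>
        rename_i u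
        -- h : G.Adj v u, q : G.Walk u v
        have hq : q.IsPath := by
          rw [Walk.isPath_def]
          simpa using hnodup
        by_cases he : s(u, v) ∈ q.edges
        · -- the edge {u,v} is in q: then q is the single edge
          obtain ⟨h', rfl⟩ := isPath_edge_mem q hq he
          rw [kasPhi_cons, kasPhi_cons, kasPhi_nil, mul_one]
          have hcol := hbip v u h
          have hsym : s(u, v) = s(v, u) := Sym2.eq_swap
          have hne : w s(v, u) ≠ 0 := by
            apply hw
            rw [SimpleGraph.mem_edgeSet]
            exact h
          have hcol' : col v ≠ col u := hcol
          cases hcv : col v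
          · have hcu : col u = true := by
              revert hcol'; rw [hcv]; cases col u <;> simp
            simp only [hcu, hsym, Bool.false_eq_true, reduceIte, Set.mem_insert_iff,
              Set.mem_singleton_iff]
            left
            exact mul_inv_cancel₀ hne
          · have hcu : col u = false := by
              revert hcol'; rw [hcv]; cases col u <;> simp
            simp only [hcu, hsym, Bool.false_eq_true, reduceIte, Set.mem_insert_iff,
              Set.mem_singleton_iff]
            left
            exact inv_mul_cancel₀ hne
        · -- it's a cycle
          have hcyc : (Walk.cons h q).IsCycle := by
            rw [Walk.cons_isCycle_iff]
            exact ⟨hq, by rwa [Sym2.eq_swap]⟩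
          have hc := hcurv v (Walk.cons h q) hcyc
          set m := (Walk.cons h q).length / 2 + 1 with hm
          have hpm : ((-1 : ℂ)) ^ m = 1 ∨ ((-1 : ℂ)) ^ m = -1 := neg_one_pow_eq_or ℂ m
          have hsq : ((-1 : ℂ)) ^ m * ((-1 : ℂ)) ^ m = 1 := by
            rw [← pow_add]
            exact Even.neg_one_pow ⟨m, rfl⟩
          have hX : kasPhi col w (Walk.cons h q) =
              ((-1 : ℂ)) ^ m * (((-1 : ℂ)) ^ m * (kasPhi col w (Walk.cons h q))) := by
            rw [← mul_assoc, hsq, one_mul]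
          have hc' : ((-1 : ℂ)) ^ m * kasPhi col w (Walk.cons h q) ∈ ({1, -1} : Set ℂ) := hc
          rw [hX]
          simp only [Set.mem_insert_iff, Set.mem_singleton_iff] at hc' ⊢
          rcases hpm with h1 | h1 <;> rcases hc' with h2 | h2 <;>
            rw [h2, h1] <;> norm_num
    · -- there is a repeated vertex: split the walk
      obtain ⟨x, hdup⟩ := List.exists_duplicate_iff_not_nodup.mpr hnodup
      have hx : x ∈ p.support := List.mem_of_mem_tail hdup.mem
      set q := p.rotate x hx with hqdef
      have hphi : kasPhi col w p = kasPhi col w q :=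
        (kasPhi_perm col w (p.rotate_darts x hx).perm).symm
      have hlen : q.length = p.length := by
        rw [← Walk.length_darts, ← Walk.length_darts]
        exact (p.rotate_darts x hx).perm.length_eq
      have hdup2 : List.Duplicate x q.support.tail := by
        rw [List.duplicate_iff_two_le_count] at hdup ⊢
        rw [(p.support_rotate x hx).perm.count_eq]
        exact hdup
      cases hq : q with
      | nil =>
        rw [hphi, hq]
        simp
      | cons h' q' =>
        rename_i y
        -- h' : G.Adj x y, q' : G.Walk y x
        rw [hq] at hdup2
        rw [Walk.support_cons, List.tail_cons] at hdup2
        have hmem : x ∈ q'.support := hdup2.mem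
        have hspec := q'.take_spec hmem
        have hcount1 := q'.count_support_takeUntil_eq_one hmem
        set q1 := q'.takeUntil x hmem with hq1
        set q2 := q'.dropUntil x hmem with hq2
        have hlen2 : 1 ≤ q2.length := by
          by_contra hcon
          push_neg at hcon
          have h : q2.length = 0 := by omega
          have hcount2 : List.count x q'.support =
              List.count x q1.support + List.count x q2.support.tail := by
            rw [← hspec, Walk.support_append, List.count_append]
          have : q2.support.tail = [] := by
            have := q2.length_support
            rw [h] at this
            cases hs : q2.support with
            | nil => simp [hs] at this
            | cons a l =>
              rw [hs] at this
              simp at this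
              simp [this]
          rw [this] at hcount2
          simp at hcount2
          rw [List.duplicate_iff_two_le_count] at hdup2
          omega
        have hlensum : q1.length + q2.length = q'.length := by
          conv_rhs => rw [← hspec]
          rw [Walk.length_append]
        have hlenq : q'.length + 1 = q.length := by rw [hq]; simp
        have hsplit : kasPhi col w q = kasPhi col w (Walk.cons h' q1) * kasPhi col w q2 := by
          rw [hq]
          conv_lhs => rw [← hspec]
          rw [← Walk.cons_append, kasPhi_append]
        rw [hphi, hsplit]
        apply pm_mul_pm
        · apply ih x
          rw [Walk.length_cons]
          omega
        · apply ih x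
          omega

end

theorem kasteleyn_pm_one_curvature_gauge_equiv
    {V : Type*} [Fintype V] (G : SimpleGraph V) (hconn : G.Connected)
    (col : V → Bool) (hbip : ∀ u v, G.Adj u v → col u ≠ col v)
    (w : Sym2 V → ℂ) (hw : ∀ e ∈ G.edgeSet, w e ≠ 0)
    (hcurv : ∀ (v : V) (p : G.Walk v v), p.IsCycle →
      (-1 : ℂ) ^ (p.length / 2 + 1) *
          (((p.darts.filter fun d => !col d.fst).map fun d => w d.edge).prod /
            ((p.darts.filter fun d => col d.fst).map fun d => w d.edge).prod)
        ∈ ({1, -1} : Set ℂ)) :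
    ∃ f : V → ℂ, (∀ v, f v ≠ 0) ∧
      ∀ u v, G.Adj u v → f u * f v * w s(u, v) ∈ ({1, -1} : Set ℂ) := by
  classical
  have hV : Nonempty V := hconn.nonempty
  set r : V := Classical.arbitrary V with hr
  have hreach : ∀ u, G.Reachable r u := fun u => hconn.preconnected r u
  let pu : ∀ u : V, G.Walk r u := fun u => Classical.choice (hreach u)
  refine ⟨fun u => if col u then (kasPhi col w (pu u))⁻¹ else kasPhi col w (pu u), ?_, ?_⟩
  · intro v
    dsimp only
    split
    · exact inv_ne_zero (kasPhi_ne_zero col w hw _)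
    · exact kasPhi_ne_zero col w hw _
  · have key : ∀ u v, G.Adj u v → col u = false →
        kasPhi col w (pu u) * (kasPhi col w (pu v))⁻¹ * w s(u, v) ∈ ({1, -1} : Set ℂ) := by
      intro u v huv hcu
      have hmem := kasPhi_closed col w hbip hw hcurv
        ((pu u).append (Walk.cons huv (pu v).reverse)).length r
        ((pu u).append (Walk.cons huv (pu v).reverse)) le_rfl
      rw [kasPhi_append, kasPhi_cons, kasPhi_reverse col w hbip, hcu] at hmem
      simp only [Bool.false_eq_true, if_false] at hmem
      have heq : kasPhi col w (pu u) * (kasPhi col w (pu v))⁻¹ * w s(u, v) =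
          kasPhi col w (pu u) * (w s(u, v) * (kasPhi col w (pu v))⁻¹) := by ring
      rw [heq]
      exact hmem
    intro u v huv
    dsimp only
    cases hcu : col u
    · have hcv : col v = true := by
        cases hcv' : col v
        · exact absurd (hcu.trans hcv'.symm) (hbip u v huv)
        · rfl
      simp only [hcu, hcv, Bool.false_eq_true, reduceIte]
      simpa using key u v huv hcu
    · have hcv : col v = false := by
        cases hcv' : col v
        · rfl
        · exact absurd (hcu.trans hcv'.symm) (hbip u v huv)
      simp only [hcu, hcv, Bool.false_eq_true, reduceIte]
      have hk := key v u huv.symm hcv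
      have heq : (kasPhi col w (pu u))⁻¹ * kasPhi col w (pu v) * w s(u, v) =
          kasPhi col w (pu v) * (kasPhi col w (pu u))⁻¹ * w s(v, u) := by
        rw [Sym2.eq_swap (a := v) (b := u)]
        ring
      simpa [heq] using hk
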